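/- Permutation insertion lemma: if s ⊐_ℓ b by clause (sb), b = b₀ ++ b₁ with both b₀ and b₁ nonempty, then for any sequence c, [s] ++ c ⊐_ℓ b₀ ++ c ++ b₁ holds by clause (ab). -/
import Mathlib

/-- First-order terms over a signature `F` and variables `V` (variadic). -/
inductive Tm (F V : Type) : Type
  | var : V → Tm F V
  | app : F → List (Tm F V) → Tm F V

/-- Proper subterm relation: `PSub s t` means `s` is a proper subterm of `t`. -/
inductive PSub {F V : Type} : Tm F V → Tm F V → Prop
  | arg {f : F} {ts : List (Tm F V)} {t : Tm F V} : t ∈ ts → PSub t (Tm.app f ts)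
  | trans {f : F} {ts : List (Tm F V)} {s t : Tm F V} : t ∈ ts → PSub s t → PSub s (Tm.app f ts)

/-- Terms or sequences of terms. -/
abbrev TS (F V : Type) := Tm F V ⊕ List (Tm F V)

/-- The order `⊐_ℓ` on terms and sequences of terms, given a precedence `prec`. -/
inductive Spl {F V : Type} (prec : F → F → Prop) (ℓ : ℕ) : TS F V → TS F V → Prop
  | st {f g : F} {ss ts : List (Tm F V)} :
      prec f g → (∀ t ∈ ts, PSub t (Tm.app f ss)) → ts.length ≤ ℓ →
      Spl prec ℓ (Sum.inl (Tm.app f ss)) (Sum.inl (Tm.app g ts))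
  | sb {f : F} {ss ts : List (Tm F V)} :
      (∀ t ∈ ts, Spl prec ℓ (Sum.inl (Tm.app f ss)) (Sum.inl t)) → ts.length ≤ ℓ →
      Spl prec ℓ (Sum.inl (Tm.app f ss)) (Sum.inr ts)
  | ab {ss ts : List (Tm F V)} (bs : List (List (Tm F V)))
      (i : ℕ) (s : Tm F V) (b : List (Tm F V)) :
      bs.length = ss.length →
      bs.flatten.Perm ts →
      (∀ (j : ℕ) s' b', ss[j]? = some s' → bs[j]? = some b' →
        b' ≠ [s'] → Spl prec ℓ (Sum.inl s') (Sum.inr b')) →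
      ss[i]? = some s → bs[i]? = some b →
      Spl prec ℓ (Sum.inl s) (Sum.inr b) →
      Spl prec ℓ (Sum.inr ss) (Sum.inr ts)


/-- permutation insertion lemma. If `s ⊐_ℓ b₀ ++ b₁` by clause (sb)
with both `b₀` and `b₁` nonempty, then `[s] ++ c ⊐_ℓ b₀ ++ c ++ b₁` (by clause (ab)). -/
theorem spl_perm_insert {F V : Type} (prec : F → F → Prop) (ℓ : ℕ)
    (f : F) (ss b₀ b₁ : List (Tm F V))
    (hsb : ∀ t ∈ b₀ ++ b₁, Spl prec ℓ (Sum.inl (Tm.app f ss)) (Sum.inl t))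
    (hlen : (b₀ ++ b₁).length ≤ ℓ)
    (h₀ : b₀ ≠ []) (h₁ : b₁ ≠ []) :
    ∀ c : List (Tm F V),
      Spl prec ℓ (Sum.inr ([Tm.app f ss] ++ c)) (Sum.inr (b₀ ++ c ++ b₁)) := by
  intro c
  refine Spl.ab ((b₀ ++ b₁) :: c.map (fun x => [x])) 0 (Tm.app f ss) (b₀ ++ b₁)
    ?_ ?_ ?_ (by simp) (by simp) (Spl.sb hsb hlen)
  · simp
  · simp only [List.flatten_cons]
    have hc : (c.map fun x => [x]).flatten = c := by induction c with | nil => rfl | cons a t ih => simp [ih]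
    rw [hc, List.append_assoc, List.append_assoc]
    exact List.perm_append_comm.append_left b₀
  · intro j s' b' hs hb hne
    match j with
    | 0 =>
      simp at hs hb
      subst hs; subst hb
      exact Spl.sb hsb hlen
    | j+1 =>
      simp at hs hb
      obtain ⟨x, hx, rfl⟩ := hb
      rw [hs] at hx
      cases hx
      exact absurd rfl hne
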